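/- Let d and l be natural numbers with l ≤ d, and let k > C(d,l) (the binomial coefficient 'd choose l'). Let η_1, …, η_k : B(0,1) → ⋀^l(ℝ^d) and θ_1, …, θ_k : B(0,1) → ⋀^{d−l}(ℝ^d) be functions on the open unit ball B(0,1) ⊂ ℝ^d such that for each pair i ≠ j one has η_i(x) ∧ θ_j(x) = 0 for Lebesgue-almost every x ∈ B(0,1). Then for Lebesgue-almost every x ∈ B(0,1) there exists an index i (depending on x) with η_i(x) ∧ θ_i(x) = 0. -/

import Mathlib

open MeasureTheory Metric

section Aux

variable {d l : ℕ}

/-- The wedges of basis vectors along strictly increasing index sets span the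
`l`-th exterior power (as elements of the exterior algebra). -/
lemma aux_mem_span (b : Module.Basis (Fin d) ℝ (EuclideanSpace ℝ (Fin d))) (l : ℕ)
    {z : ExteriorAlgebra ℝ (EuclideanSpace ℝ (Fin d))}
    (hz : z ∈ ⋀[ℝ]^l (EuclideanSpace ℝ (Fin d))) :
    z ∈ Submodule.span ℝ (Set.range (fun s : {s : Finset (Fin d) // s.card = l} =>
      ExteriorAlgebra.ιMulti ℝ l (fun i => b (s.1.orderIsoOfFin s.2 i)))) := by
  classical
  set V := EuclideanSpace ℝ (Fin d)
  set W := Submodule.span ℝ (Set.range (fun s : {s : Finset (Fin d) // s.card = l} =>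
      ExteriorAlgebra.ιMulti ℝ l (fun i => b (s.1.orderIsoOfFin s.2 i)))) with hW
  rw [← ExteriorAlgebra.ιMulti_span_fixedDegree] at hz
  refine Submodule.span_le.2 ?_ hz
  rintro _ ⟨v, rfl⟩
  -- first: wedges of basis vectors are in W
  have base : ∀ r : Fin l → Fin d,
      ExteriorAlgebra.ιMulti ℝ l (fun i => b (r i)) ∈ W := by
    intro r
    by_cases hr : Function.Injective r
    · set s : Finset (Fin d) := Finset.univ.image r with hs
      have hcard : s.card = l := by
        rw [hs, Finset.card_image_of_injective _ hr, Finset.card_univ, Fintype.card_fin]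
      set e := s.orderIsoOfFin hcard with he
      have hmem : ∀ i, r i ∈ s := fun i => Finset.mem_image_of_mem r (Finset.mem_univ i)
      set σ : Fin l → Fin l := fun i => e.symm ⟨r i, hmem i⟩ with hσ
      have hσinj : Function.Injective σ := by
        intro i j hij
        exact hr (congrArg Subtype.val (e.symm.injective hij))
      let π : Equiv.Perm (Fin l) := Equiv.ofBijective σ
        (Finite.injective_iff_bijective.1 hσinj)
      have hre : (fun i => b (r i)) = (fun i => b ((e i : Fin d))) ∘ π := by
        funext i
        have : (e (π i) : Fin d) = r i := by
          simp only [π, Equiv.ofBijective_apply, hσ, OrderIso.apply_symm_apply]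
        simp [Function.comp, this]
      rw [hre, AlternatingMap.map_perm]
      exact Submodule.smul_of_tower_mem _ _
        (Submodule.subset_span ⟨⟨s, hcard⟩, rfl⟩)
    · have hbr : ¬ Function.Injective (fun i => b (r i)) := by
        intro hinj
        exact hr fun i j hij => hinj (by simp [hij])
      rw [AlternatingMap.map_eq_zero_of_not_injective _ _ hbr]
      exact Submodule.zero_mem _
  -- expand a general wedge of vectors using the basis
  have e1 : ExteriorAlgebra.ιMulti ℝ l v =
      (ExteriorAlgebra.ιMulti ℝ l).toMultilinearMap
        (fun i => ∑ j : Fin d, b.repr (v i) j • b j) := by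
    simp only [AlternatingMap.coe_multilinearMap]
    congr 1
    funext i
    exact (b.sum_repr (v i)).symm
  rw [e1, MultilinearMap.map_sum]
  refine Submodule.sum_mem _ fun r _ => ?_
  rw [MultilinearMap.map_smul_univ]
  exact Submodule.smul_mem _ _ (base r)

/-- Pointwise version: if `k > C(d,l)` elements of `⋀^l` pair to zero off-diagonally
with arbitrary elements of the exterior algebra, some diagonal product vanishes. -/
lemma aux_key (d l k : ℕ) (hk : Nat.choose d l < k)
    (a : Fin k → ⋀[ℝ]^l (EuclideanSpace ℝ (Fin d)))
    (t : Fin k → ExteriorAlgebra ℝ (EuclideanSpace ℝ (Fin d)))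
    (h : ∀ i j : Fin k, i ≠ j →
      (a i : ExteriorAlgebra ℝ (EuclideanSpace ℝ (Fin d))) * t j = 0) :
    ∃ i : Fin k, (a i : ExteriorAlgebra ℝ (EuclideanSpace ℝ (Fin d))) * t i = 0 := by
  classical
  obtain ⟨b⟩ : Nonempty (Module.Basis (Fin d) ℝ (EuclideanSpace ℝ (Fin d))) :=
    ⟨(Pi.basisFun ℝ (Fin d)).map (EuclideanSpace.equiv (Fin d) ℝ).symm.toLinearEquiv⟩
  set f : {s : Finset (Fin d) // s.card = l} → ExteriorAlgebra ℝ (EuclideanSpace ℝ (Fin d)) :=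
    fun s => ExteriorAlgebra.ιMulti ℝ l (fun i => b (s.1.orderIsoOfFin s.2 i)) with hf
  have hdep : ¬ LinearIndependent ℝ
      (fun i : Fin k => (a i : ExteriorAlgebra ℝ (EuclideanSpace ℝ (Fin d)))) := by
    intro hli
    have h1 := linearIndependent_le_span' _ hli (Set.range f) ?_
    · have h2 : Fintype.card (Set.range f) ≤ Nat.choose d l := by
        calc Fintype.card (Set.range f) ≤ Fintype.card {s : Finset (Fin d) // s.card = l} :=
              Fintype.card_range_le f
        _ = Nat.choose d l := by
              rw [Fintype.card_finset_len, Fintype.card_fin]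
      rw [Cardinal.mk_fintype, Fintype.card_fin, Nat.cast_le] at h1
      omega
    · rintro _ ⟨i, rfl⟩
      exact aux_mem_span b l (a i).2
  obtain ⟨g, hg, n, hn⟩ := Fintype.not_linearIndependent_iff.1 hdep
  refine ⟨n, ?_⟩
  have hz : (∑ i, g i • (a i : ExteriorAlgebra ℝ (EuclideanSpace ℝ (Fin d)))) * t n = 0 := by
    rw [hg, zero_mul]
  rw [Finset.sum_mul, Finset.sum_eq_single n
    (fun i _ hin => by rw [smul_mul_assoc, h i n hin, smul_zero])
    (fun hn' => absurd (Finset.mem_univ n) hn')] at hz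
  rw [smul_mul_assoc] at hz
  exact (smul_eq_zero.1 hz).resolve_left hn

end Aux

theorem ae_exists_diag_wedge_zero_of_offdiag_wedge_ae_zero
    (d l : ℕ) (hl : l ≤ d) (k : ℕ) (hk : Nat.choose d l < k)
    (η : Fin k → EuclideanSpace ℝ (Fin d) → ⋀[ℝ]^l (EuclideanSpace ℝ (Fin d)))
    (θ : Fin k → EuclideanSpace ℝ (Fin d) → ⋀[ℝ]^(d - l) (EuclideanSpace ℝ (Fin d)))
    (h : ∀ i j : Fin k, i ≠ j →
      ∀ᵐ x ∂(volume.restrict (ball (0 : EuclideanSpace ℝ (Fin d)) 1)),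
        (η i x : ExteriorAlgebra ℝ (EuclideanSpace ℝ (Fin d))) * (θ j x) = 0) :
    ∀ᵐ x ∂(volume.restrict (ball (0 : EuclideanSpace ℝ (Fin d)) 1)),
      ∃ i : Fin k,
        (η i x : ExteriorAlgebra ℝ (EuclideanSpace ℝ (Fin d))) * (θ i x) = 0 := by
  have H : ∀ᵐ x ∂(volume.restrict (ball (0 : EuclideanSpace ℝ (Fin d)) 1)),
      ∀ i j : Fin k, i ≠ j →
        (η i x : ExteriorAlgebra ℝ (EuclideanSpace ℝ (Fin d))) * (θ j x) = 0 := by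
    rw [ae_all_iff]
    intro i
    rw [ae_all_iff]
    intro j
    by_cases hij : i = j
    · exact ae_of_all _ fun x hij' => absurd hij hij'
    · filter_upwards [h i j hij] with x hx _ using hx
  filter_upwards [H] with x hx
  exact aux_key d l k hk (fun i => η i x) (fun i => (θ i x :)) hx
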